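/- Addition of extensional fuzzy numbers built from the relation S_t agrees with the Zadeh sup–T extension: for all reals x, y, z and all parameters p_x, p_y > 0, the supremum over a ∈ ℝ of max(0, S_t(p_x)(x,a) + S_t(p_y)(y, z − a) − 1) equals S_t(max(p_x,p_y))(x + y, z); i.e., the Łukasiewicz-extension sum of x_{S_t(p_x)} and y_{S_t(p_y)} is the extensional fuzzy number (x+y)_{S_t(max(p_x,p_y))}. -/
import Mathlib


/-- The relation `S_t(p)(x,y) = max(1 - |x - y|/p, 0)`. -/
noncomputable def St (p x y : ℝ) : ℝ := max (1 - |x - y| / p) 0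

/-- The Łukasiewicz t-norm `T(a,b) = max(0, a + b - 1)`. -/
noncomputable def luk (a b : ℝ) : ℝ := max 0 (a + b - 1)

theorem St_addition (x y z px py : ℝ) (hpx : 0 < px) (hpy : 0 < py) :
    (⨆ a : ℝ, luk (St px x a) (St py y (z - a))) = St (max px py) (x + y) z := by
  have hP : (0:ℝ) < max px py := lt_max_of_lt_left hpx
  have key : ∀ a, luk (St px x a) (St py y (z - a)) ≤ St (max px py) (x + y) z := by
    intro a
    unfold luk St
    apply max_le (le_max_right _ _)
    have hA : 0 ≤ |x - a| / px := div_nonneg (abs_nonneg _) hpx.le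
    have hB : 0 ≤ |y - (z - a)| / py := div_nonneg (abs_nonneg _) hpy.le
    rcases le_or_gt (1 - |x - a| / px) 0 with h | h
    · rw [max_eq_right h]
      have : max (1 - |y - (z - a)| / py) 0 ≤ 1 := max_le (by linarith) zero_le_one
      have := le_max_right (1 - |x + y - z| / max px py) (0:ℝ)
      linarith
    · rcases le_or_gt (1 - |y - (z - a)| / py) 0 with h2 | h2
      · rw [max_eq_right h2]
        have : max (1 - |x - a| / px) 0 ≤ 1 := max_le (by linarith) zero_le_one
        have := le_max_right (1 - |x + y - z| / max px py) (0:ℝ)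
        linarith
      · rw [max_eq_left h.le, max_eq_left h2.le]
        have htri : |x + y - z| ≤ |x - a| + |y - (z - a)| := by
          have heq : x + y - z = (x - a) + (y - (z - a)) := by ring
          rw [heq]; exact abs_add_le _ _
        have h1 : |x - a| / max px py ≤ |x - a| / px :=
          div_le_div_of_nonneg_left (abs_nonneg _) hpx (le_max_left _ _)
        have h2' : |y - (z - a)| / max px py ≤ |y - (z - a)| / py :=
          div_le_div_of_nonneg_left (abs_nonneg _) hpy (le_max_right _ _)
        have h3 : |x + y - z| / max px py ≤ |x - a| / max px py + |y - (z - a)| / max px py := by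
          rw [← add_div]; gcongr
        have := le_max_left (1 - |x + y - z| / max px py) (0:ℝ)
        linarith
  have hbdd : BddAbove (Set.range fun a => luk (St px x a) (St py y (z - a))) :=
    ⟨St (max px py) (x + y) z, by rintro _ ⟨a, rfl⟩; exact key a⟩
  apply le_antisymm (ciSup_le key)
  rcases le_total px py with hle | hle
  · refine le_trans ?_ (le_ciSup hbdd x)
    have hPy : max px py = py := max_eq_right hle
    have h1 : St px x x = 1 := by
      simp [St, sub_self, abs_zero, zero_div]
    have h2 : St py y (z - x) = St (max px py) (x + y) z := by
      unfold St
      rw [hPy]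
      congr 2
      rw [show y - (z - x) = -(z - (x + y)) by ring, abs_neg,
        show x + y - z = -(z - (x + y)) by ring, abs_neg]
    rw [h1, h2]
    unfold luk
    rw [show (1:ℝ) + St (max px py) (x + y) z - 1 = St (max px py) (x + y) z by ring]
    exact le_max_right _ _
  · refine le_trans ?_ (le_ciSup hbdd (z - y))
    have hPx : max px py = px := max_eq_left hle
    have h1 : St py y (z - (z - y)) = 1 := by
      simp [St, abs_zero, zero_div]
    have h2 : St px x (z - y) = St (max px py) (x + y) z := by
      unfold St
      rw [hPx]
      congr 2
      rw [show x - (z - y) = -(z - (x + y)) by ring, abs_neg,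
        show x + y - z = -(z - (x + y)) by ring, abs_neg]
    rw [h1, h2]
    unfold luk
    rw [show St (max px py) (x + y) z + 1 - 1 = St (max px py) (x + y) z by ring]
    exact le_max_right _ _
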